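/- Let φ = (1+√5)/2 be the golden ratio and φ' = (1-√5)/2 its conjugate. If m, n are integers with -1 ≤ m + nφ' ≤ φ - 1, then setting m' = n and n' = m + n (so that φ(m + nφ) = m' + n'φ), we have -1 ≤ m' + n'φ' ≤ φ - 1. In other words, the set Λ = {m + nφ : m, n ∈ ℤ, -1 ≤ m + nφ' ≤ φ - 1} satisfies φΛ ⊆ Λ. -/
import Mathlib


noncomputable def goldenφ : ℝ := (1 + Real.sqrt 5) / 2
noncomputable def goldenφ' : ℝ := (1 - Real.sqrt 5) / 2

noncomputable def goldenΛ : Set ℝ :=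
  {x | ∃ m n : ℤ, x = m + n * goldenφ ∧
    -1 ≤ (m : ℝ) + n * goldenφ' ∧ (m : ℝ) + n * goldenφ' ≤ goldenφ - 1}

lemma golden_key (m n : ℤ) (h1 : -1 ≤ (m : ℝ) + n * goldenφ')
    (h2 : (m : ℝ) + n * goldenφ' ≤ goldenφ - 1) :
    goldenφ * ((m : ℝ) + n * goldenφ) = ((n : ℤ) : ℝ) + ((m + n : ℤ) : ℝ) * goldenφ ∧
    -1 ≤ ((n : ℤ) : ℝ) + ((m + n : ℤ) : ℝ) * goldenφ' ∧
    ((n : ℤ) : ℝ) + ((m + n : ℤ) : ℝ) * goldenφ' ≤ goldenφ - 1 := by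
  have hs : Real.sqrt 5 ^ 2 = 5 := Real.sq_sqrt (by norm_num)
  have hs1 : 2 ≤ Real.sqrt 5 := by
    nlinarith [Real.sqrt_nonneg 5]
  have hs2 : Real.sqrt 5 ≤ 3 := by
    nlinarith [Real.sqrt_nonneg 5]
  unfold goldenφ goldenφ' at *
  have hneg : (1 - Real.sqrt 5) / 2 ≤ 0 := by nlinarith
  refine ⟨?_, ?_, ?_⟩
  · push_cast; linear_combination ((n : ℝ) / 4) * hs
  · push_cast
    have key : (n:ℝ) + ((m:ℝ)+n)*((1-Real.sqrt 5)/2)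
        = (1-Real.sqrt 5)/2 * ((m:ℝ)+n*((1-Real.sqrt 5)/2)) := by
      linear_combination -((n : ℝ) / 4) * hs
    rw [key]
    nlinarith [mul_le_mul_of_nonpos_left h2 hneg, hs, hs1, hs2]
  · push_cast
    have key : (n:ℝ) + ((m:ℝ)+n)*((1-Real.sqrt 5)/2)
        = (1-Real.sqrt 5)/2 * ((m:ℝ)+n*((1-Real.sqrt 5)/2)) := by
      linear_combination -((n : ℝ) / 4) * hs
    rw [key]
    nlinarith [mul_le_mul_of_nonpos_left h1 hneg, hs, hs1, hs2]

theorem stmt0 :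
    (∀ m n : ℤ, -1 ≤ (m : ℝ) + n * goldenφ' → (m : ℝ) + n * goldenφ' ≤ goldenφ - 1 →
      goldenφ * ((m : ℝ) + n * goldenφ) = ((n : ℤ) : ℝ) + ((m + n : ℤ) : ℝ) * goldenφ ∧
      -1 ≤ ((n : ℤ) : ℝ) + ((m + n : ℤ) : ℝ) * goldenφ' ∧
      ((n : ℤ) : ℝ) + ((m + n : ℤ) : ℝ) * goldenφ' ≤ goldenφ - 1) ∧
    (goldenφ * ·) '' goldenΛ ⊆ goldenΛ := by
  refine ⟨fun m n h1 h2 => golden_key m n h1 h2, ?_⟩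
  rintro y ⟨x, ⟨m, n, rfl, h1, h2⟩, rfl⟩
  obtain ⟨heq, h1', h2'⟩ := golden_key m n h1 h2
  exact ⟨n, m + n, heq, h1', h2'⟩
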